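/- With notation as in the quasi-eigenvector construction: let z₁ ∈ ℂ\{0}, λ ∈ ℂ, v₁ ∈ ℂ^k with f(z₁)v₁ = λv₁, and suppose v₂ ∈ ℂ^k satisfies (A_1 + (A_0 − λ)z₁^{-1} + A_{-1}z₁^{-2})v₂ = −((A_0 − λ) + 2A_{-1}z₁^{-1})v₁. Define the infinite block vector u₂ with n-th block u₂^{(n)} = z₁^{-(n−1)}v₂ + (n−1)z₁^{-(n−2)}v₁ for n ≥ 1. Then (T(f)u₂)_m = λ(u₂)_m for every index m in block rows n ≥ 2. -/
import Mathlib


open scoped BigOperators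
open Matrix

noncomputable section

def tridiagA0 {k : ℕ} (a b c : Fin (k+1) → ℂ) : Matrix (Fin (k+1)) (Fin (k+1)) ℂ :=
  Matrix.of fun i j =>
    (if i = j then a i else 0) + (if (j : ℕ) = (i : ℕ) + 1 then b i else 0) +
      (if (i : ℕ) = (j : ℕ) + 1 then c j else 0)

def cornerAm1 {k : ℕ} (b : Fin (k+1) → ℂ) : Matrix (Fin (k+1)) (Fin (k+1)) ℂ :=
  Matrix.of fun i j => if i = Fin.last k ∧ j = 0 then b (Fin.last k) else 0

def cornerA1 {k : ℕ} (c : Fin (k+1) → ℂ) : Matrix (Fin (k+1)) (Fin (k+1)) ℂ :=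
  Matrix.of fun i j => if i = 0 ∧ j = Fin.last k then c (Fin.last k) else 0

/-- The symbol `f(z) = A₋₁ z⁻¹ + A₀ + A₁ z`. -/
def symb {k : ℕ} (a b c : Fin (k+1) → ℂ) (z : ℂ) : Matrix (Fin (k+1)) (Fin (k+1)) ℂ :=
  z⁻¹ • cornerAm1 b + tridiagA0 a b c + z • cornerA1 c

/-- quasi-eigenvector (generalized Jordan chain) construction: if
`f(z₁)v₁ = λv₁` and `(A₁ + (A₀-λ)z₁⁻¹ + A₋₁z₁⁻²)v₂ = -((A₀-λ) + 2A₋₁z₁⁻¹)v₁`, then the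
block vector with `n`-th block `z₁^{-(n-1)}v₂ + (n-1)z₁^{-(n-2)}v₁` satisfies the
eigenvalue equation for `T(f)` in all block rows `n ≥ 2`. -/
theorem stmt6 (k : ℕ) (a b c : Fin (k+1) → ℂ) (z₁ lam : ℂ) (hz : z₁ ≠ 0)
    (v₁ v₂ : Fin (k+1) → ℂ)
    (hv₁ : symb a b c z₁ *ᵥ v₁ = lam • v₁)
    (hv₂ : (cornerA1 c + z₁⁻¹ • (tridiagA0 a b c - lam • 1) + (z₁⁻¹) ^ 2 • cornerAm1 b) *ᵥ v₂
        = -(((tridiagA0 a b c - lam • 1) + (2 * z₁⁻¹) • cornerAm1 b) *ᵥ v₁))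
    (u₂ : ℕ → Fin (k+1) → ℂ)
    (hu₂ : ∀ n : ℕ, u₂ n = if n = 0 then 0 else
        z₁ ^ (1 - (n : ℤ)) • v₂ + ((n : ℂ) - 1) • z₁ ^ (2 - (n : ℤ)) • v₁) :
    ∀ n : ℕ, 2 ≤ n →
      cornerA1 c *ᵥ u₂ (n - 1) + tridiagA0 a b c *ᵥ u₂ n + cornerAm1 b *ᵥ u₂ (n + 1) =
        lam • u₂ n := by
  intro n hn
  obtain ⟨j, rfl⟩ : ∃ j, n = j + 2 := ⟨n - 2, by omega⟩
  funext i
  have h1 := congrFun hv₁ i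
  have h2 := congrFun hv₂ i
  have hz' : z₁ * z₁⁻¹ = 1 := mul_inv_cancel₀ hz
  simp only [symb, Matrix.add_mulVec, Matrix.smul_mulVec, Matrix.sub_mulVec,
    Matrix.one_mulVec, Pi.add_apply, Pi.smul_apply, Pi.sub_apply, Pi.neg_apply,
    smul_eq_mul, Matrix.neg_mulVec] at h1 h2
  simp only [hu₂]
  have e1 : (j:ℕ) + 2 - 1 = j + 1 := by omega
  rw [e1]
  simp only [if_neg (by omega : ¬ (j+1 = 0)), if_neg (by omega : ¬ (j+2 = 0)),
    if_neg (by omega : ¬ (j+2+1 = 0))]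
  push_cast
  have E1 : (1 : ℤ) - ((j:ℤ) + 1) = -(j:ℤ) := by ring
  have E2 : (2 : ℤ) - ((j:ℤ) + 1) = -(j:ℤ) + 1 := by ring
  have E3 : (1 : ℤ) - ((j:ℤ) + 2) = -(j:ℤ) - 1 := by ring
  have E4 : (2 : ℤ) - ((j:ℤ) + 2) = -(j:ℤ) := by ring
  have E5 : (1 : ℤ) - ((j:ℤ) + 2 + 1) = -(j:ℤ) - 1 - 1 := by ring
  have E6 : (2 : ℤ) - ((j:ℤ) + 2 + 1) = -(j:ℤ) - 1 := by ring
  rw [E1, E2, E3, E4, E5, E6]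
  set W := z₁ ^ (-(j:ℤ)) with hW
  have hWa : z₁ ^ (-(j:ℤ) + 1) = W * z₁ := zpow_add_one₀ hz _
  have hWb : z₁ ^ (-(j:ℤ) - 1) = W * z₁⁻¹ := zpow_sub_one₀ hz _
  have hWc : z₁ ^ (-(j:ℤ) - 1 - 1) = W * z₁⁻¹ * z₁⁻¹ := by
    rw [zpow_sub_one₀ hz, hWb]
  rw [hWa, hWb, hWc]
  simp only [Matrix.mulVec_add, Matrix.mulVec_smul, Pi.add_apply, Pi.smul_apply,
    smul_eq_mul]
  linear_combination ((j:ℂ)) * W * h1 + W * h2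

end
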